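/- Let K be a field and let r and H be natural numbers. Suppose w_0, ..., w_r are r+1 row vectors in (K[x])^r whose coordinates all have degree at most H. Then there exists a non-trivial linear dependence relation ∑_{i=0}^{r} Q_i(x)·w_i = 0 in which Q_0, ..., Q_r are polynomials in K[x] whose degrees are all bounded by H·r. -/

import Mathlib

open Polynomial

private lemma finrank_degreeLT (K : Type*) [Field K] (n : ℕ) :
    Module.finrank K (degreeLT K n) = n := by
  rw [LinearEquiv.finrank_eq (degreeLTEquiv K n), Module.finrank_pi, Fintype.card_fin]

/-- Lemma 5.4: given `r+1` row vectors in `(K[x])^r` with coordinates of degree at most `H`,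
there is a nontrivial linear dependence relation with polynomial coefficients of degree
at most `H * r`. -/
theorem lemma_dependence_relation (K : Type*) [Field K] (r H : ℕ)
    (w : Fin (r + 1) → Fin r → Polynomial K)
    (hdeg : ∀ i j, (w i j).natDegree ≤ H) :
    ∃ Q : Fin (r + 1) → Polynomial K,
      (∃ i, Q i ≠ 0) ∧
      (∀ i, (Q i).natDegree ≤ H * r) ∧
      (∀ j, ∑ i, Q i * w i j = 0) := by
  have hfin : ∀ n : ℕ, FiniteDimensional K (degreeLT K n) := fun n =>
    Module.Finite.equiv (degreeLTEquiv K n).symm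
  -- membership lemma
  have hndeg : ∀ (Q : Fin (r + 1) → degreeLT K (H * r + 1)) (i : Fin (r + 1)),
      ((Q i : K[X])).natDegree ≤ H * r := by
    intro Q i
    have h := mem_degreeLT.mp (Q i).2
    by_cases h0 : (Q i : K[X]) = 0
    · simp [h0]
    · rw [degree_eq_natDegree h0, Nat.cast_lt] at h
      omega
  have hmem : ∀ (Q : Fin (r + 1) → degreeLT K (H * r + 1)) (j : Fin r),
      (∑ i, (Q i : K[X]) * w i j) ∈ degreeLT K (H * r + H + 1) := by
    intro Q j
    rw [mem_degreeLT]
    refine lt_of_le_of_lt (degree_sum_le _ _) ?_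
    rw [Finset.sup_lt_iff (by exact_mod_cast WithBot.bot_lt_coe _)]
    intro i _
    refine lt_of_le_of_lt (degree_mul_le _ _) ?_
    calc ((Q i : K[X])).degree + (w i j).degree
        ≤ (((Q i : K[X])).natDegree : WithBot ℕ) + ((w i j).natDegree : WithBot ℕ) :=
          add_le_add degree_le_natDegree degree_le_natDegree
      _ ≤ ((H * r : ℕ) : WithBot ℕ) + ((H : ℕ) : WithBot ℕ) := by
          exact add_le_add (by exact_mod_cast hndeg Q i) (by exact_mod_cast hdeg i j)
      _ < ((H * r + H + 1 : ℕ) : WithBot ℕ) := by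
          rw [← Nat.cast_add]; exact_mod_cast Nat.lt_succ_self _
  -- the linear map
  let φ : (Fin (r + 1) → degreeLT K (H * r + 1)) →ₗ[K]
      (Fin r → degreeLT K (H * r + H + 1)) :=
    { toFun := fun Q j => ⟨∑ i, (Q i : K[X]) * w i j, hmem Q j⟩
      map_add' := by
        intro Q₁ Q₂
        funext j
        apply Subtype.ext
        simp [add_mul, Finset.sum_add_distrib]
      map_smul' := by
        intro c Q
        funext j
        apply Subtype.ext
        simp [Finset.smul_sum, smul_mul_assoc] }
  have hnotinj : ¬ Function.Injective φ := by
    intro hinj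
    have := LinearMap.finrank_le_finrank_of_injective hinj
    rw [Module.finrank_pi_fintype, Module.finrank_pi_fintype] at this
    simp only [finrank_degreeLT, Finset.sum_const, Finset.card_univ, Fintype.card_fin,
      smul_eq_mul] at this
    nlinarith
  rw [Function.not_injective_iff] at hnotinj
  obtain ⟨a, b, hab, hne⟩ := hnotinj
  refine ⟨fun i => ((a - b) i : K[X]), ?_, ?_, ?_⟩
  · by_contra hc
    push_neg at hc
    apply hne
    have : a - b = 0 := by
      funext i
      exact Subtype.ext (by simpa using hc i)
    exact sub_eq_zero.mp this
  · intro i; exact hndeg (a - b) i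
  · intro j
    have := congrFun hab j
    have h2 : (∑ i, ((a - b) i : K[X]) * w i j) = 0 := by
      have := Subtype.ext_iff.mp this
      simp only [φ] at this ⊢
      calc (∑ i, ((a - b) i : K[X]) * w i j)
          = ∑ i, ((a i : K[X]) * w i j - (b i : K[X]) * w i j) := by
            refine Finset.sum_congr rfl fun i _ => ?_
            simp [sub_mul]
        _ = (∑ i, (a i : K[X]) * w i j) - ∑ i, (b i : K[X]) * w i j :=
            Finset.sum_sub_distrib _ _
        _ = 0 := sub_eq_zero.mpr (by simpa using this)
    exact h2
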